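/- The function h(α) = (1 − 1/α)^{α−1}·2^α on (1, ∞) attains its minimum at the unique α* ∈ (1, ∞) satisfying (1 − 1/α)^α · 2^α = 1/e, and at this minimizer h(α*)·e = α*/(α* − 1). Moreover α* ∈ (1.302017, 1.302018), so the minimum value of h(α)·e is less than 4.312. -/

import Mathlib

open Real Set Finset

noncomputable def F15 : ℝ → ℝ := fun x => x * (Real.log 2 + Real.log (x - 1) - Real.log x)

noncomputable def G15 : ℝ → ℝ :=
  fun x => (x - 1) * (Real.log (x - 1) - Real.log x) + x * Real.log 2

lemma F15_hasDerivAt {x : ℝ} (hx : 1 < x) :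
    HasDerivAt F15 (Real.log 2 + Real.log (x - 1) - Real.log x + 1 / (x - 1)) x := by
  have hx0 : x ≠ 0 := by linarith
  have hx1 : x - 1 ≠ 0 := by intro h; linarith [sub_eq_zero.mp h]
  have h1 : HasDerivAt (fun y : ℝ => Real.log (y - 1)) (1 / (x - 1)) x := by
    have := (Real.hasDerivAt_log hx1).comp x ((hasDerivAt_id x).sub_const 1)
    simpa [Function.comp_def] using this
  have h2 := (h1.const_add (Real.log 2)).sub (Real.hasDerivAt_log hx0)
  have h3 := (hasDerivAt_id x).mul h2
  have hthis : HasDerivAt F15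
      (1 * (Real.log 2 + Real.log (x - 1) - Real.log x) + x * (1 / (x - 1) - x⁻¹)) x := by
    unfold F15; simpa [F15, mul_comm, Pi.mul_def, Pi.sub_def, Pi.add_def] using h3
  convert hthis using 1
  field_simp
  ring

lemma G15_hasDerivAt {x : ℝ} (hx : 1 < x) :
    HasDerivAt G15 ((F15 x + 1) / x) x := by
  have hx0 : x ≠ 0 := by linarith
  have hx1 : x - 1 ≠ 0 := by intro h; linarith [sub_eq_zero.mp h]
  have h1 : HasDerivAt (fun y : ℝ => Real.log (y - 1)) (1 / (x - 1)) x := by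
    have := (Real.hasDerivAt_log hx1).comp x ((hasDerivAt_id x).sub_const 1)
    simpa [Function.comp_def] using this
  have h2 := h1.sub (Real.hasDerivAt_log hx0)
  have h3 := (((hasDerivAt_id x).sub_const 1).mul h2).add
    ((hasDerivAt_id x).const_mul (Real.log 2))
  have h4 : HasDerivAt G15
      (1 * (Real.log (x - 1) - Real.log x) + (x - 1) * (1 / (x - 1) - x⁻¹)
        + Real.log 2 * 1) x := by
    unfold G15; simpa [G15, mul_comm, Pi.mul_def, Pi.sub_def, Pi.add_def] using h3
  convert h4 using 1
  simp only [F15]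
  field_simp
  ring

lemma F15_deriv_pos {x : ℝ} (hx : 1 < x) :
    0 < Real.log 2 + Real.log (x - 1) - Real.log x + 1 / (x - 1) := by
  have hx1 : (0:ℝ) < x - 1 := by linarith
  have hpos : (0:ℝ) < x / (2 * (x - 1)) := by positivity
  have h1 : Real.log (x / (2 * (x - 1))) ≤ x / (2 * (x - 1)) - 1 :=
    Real.log_le_sub_one_of_pos hpos
  have h2 : Real.log (x / (2 * (x - 1))) =
      Real.log x - (Real.log 2 + Real.log (x - 1)) := by
    rw [Real.log_div (by linarith) (by positivity), Real.log_mul (by norm_num) (ne_of_gt hx1)]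
  rw [h2] at h1
  have h3 : x / (2 * (x - 1)) - 1 < 1 / (x - 1) := by
    rw [div_sub_one (by positivity), div_lt_div_iff₀ (by positivity) hx1]
    nlinarith
  linarith

lemma F15_strictMono : StrictMonoOn F15 (Ioi 1) := by
  apply strictMonoOn_of_deriv_pos (convex_Ioi 1)
  · exact fun x hx => (F15_hasDerivAt hx).continuousAt.continuousWithinAt
  · intro x hx
    rw [interior_Ioi] at hx
    rw [(F15_hasDerivAt hx).deriv]
    exact F15_deriv_pos hx

lemma exp_taylor_bounds {q : ℝ} (hq0 : 0 < q) (hq1 : q ≤ 1) :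
    |Real.exp q - ∑ m ∈ Finset.range 10, q ^ m / m.factorial|
      ≤ q ^ 10 * (11 / (3628800 * 10)) := by
  have h := Real.exp_bound (x := q) (by rw [abs_of_pos hq0]; exact hq1) (n := 10) (by norm_num)
  rw [abs_of_pos hq0] at h
  convert h using 3 <;> norm_num [Nat.factorial]

lemma num1 : Real.exp (1000000 / 1302017) < 1302017 / 604034 := by
  have h := exp_taylor_bounds (q := 1000000 / 1302017) (by norm_num) (by norm_num)
  have h1 := (abs_sub_le_iff.1 h).1
  simp only [Finset.sum_range_succ, Finset.sum_range_zero] at h1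
  norm_num [Nat.factorial] at h1 ⊢
  nlinarith [h1]

lemma num2 : (1302018 : ℝ) / 604036 < Real.exp (1000000 / 1302018) := by
  have h := exp_taylor_bounds (q := 1000000 / 1302018) (by norm_num) (by norm_num)
  have h1 := (abs_sub_le_iff.1 h).2
  simp only [Finset.sum_range_succ, Finset.sum_range_zero] at h1
  norm_num [Nat.factorial] at h1 ⊢
  nlinarith [h1]

lemma F15_exp {x : ℝ} (hx : 1 < x) :
    Real.exp (F15 x) = (2 * (x - 1) / x) ^ x := by
  have hx1 : (0:ℝ) < x - 1 := by linarith
  have hpos : (0:ℝ) < 2 * (x - 1) / x := by positivity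
  rw [Real.rpow_def_of_pos hpos, Real.log_div (by positivity) (by linarith),
    Real.log_mul (by norm_num) (ne_of_gt hx1)]
  simp [F15, mul_comm]

lemma F15_lt {x : ℝ} (hx : 1 < x) (h : Real.exp (1 / x) < x / (2 * (x - 1))) :
    F15 x < -1 := by
  have hx1 : (0:ℝ) < x - 1 := by linarith
  have hx0 : (0:ℝ) < x := by linarith
  have h1 : Real.exp (F15 x) < Real.exp (-1) := by
    rw [F15_exp hx]
    have hlt : 2 * (x - 1) / x < Real.exp (-1 / x) := by
      rw [neg_div, Real.exp_neg, ← one_div, lt_div_iff₀ (Real.exp_pos _)]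
      have key : 2 * (x - 1) / x * (x / (2 * (x - 1))) = 1 := by field_simp
      nlinarith [mul_lt_mul_of_pos_left h (show (0:ℝ) < 2 * (x - 1) / x by positivity)]
    calc (2 * (x - 1) / x) ^ x < (Real.exp (-1 / x)) ^ x := by
          apply Real.rpow_lt_rpow (by positivity) hlt hx0
      _ = Real.exp (-1) := by
          rw [← Real.exp_mul]
          congr 1
          field_simp
  exact Real.exp_lt_exp.1 h1

lemma F15_gt {x : ℝ} (hx : 1 < x) (h : x / (2 * (x - 1)) < Real.exp (1 / x)) :
    -1 < F15 x := by
  have hx1 : (0:ℝ) < x - 1 := by linarith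
  have hx0 : (0:ℝ) < x := by linarith
  have h1 : Real.exp (-1) < Real.exp (F15 x) := by
    rw [F15_exp hx]
    have hlt : Real.exp (-1 / x) < 2 * (x - 1) / x := by
      rw [neg_div, Real.exp_neg, ← one_div, div_lt_iff₀ (Real.exp_pos _)]
      have key : x / (2 * (x - 1)) * (2 * (x - 1) / x) = 1 := by field_simp
      nlinarith [mul_lt_mul_of_pos_right h (show (0:ℝ) < 2 * (x - 1) / x by positivity)]
    calc Real.exp (-1) = (Real.exp (-1 / x)) ^ x := by
          rw [← Real.exp_mul]; congr 1; field_simp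
      _ < (2 * (x - 1) / x) ^ x := Real.rpow_lt_rpow (Real.exp_pos _).le hlt hx0
  exact Real.exp_lt_exp.1 h1

lemma gEq {α : ℝ} (hα : 1 < α) :
    (1 - 1 / α) ^ α * (2:ℝ) ^ α = Real.exp (F15 α) := by
  have hα0 : (0:ℝ) < α := by linarith
  have h1 : (1:ℝ) - 1 / α = (α - 1) / α := by field_simp
  have h2 : (0:ℝ) < (α - 1) / α := by rw [← h1]; rw [sub_pos, div_lt_one hα0]; linarith
  rw [h1, Real.rpow_def_of_pos h2, Real.rpow_def_of_pos (by norm_num : (0:ℝ) < 2),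
    ← Real.exp_add, Real.log_div (by linarith) (by linarith)]
  simp only [F15]
  ring_nf

lemma hEq {α : ℝ} (hα : 1 < α) :
    (1 - 1 / α) ^ (α - 1) * (2:ℝ) ^ α = Real.exp (G15 α) := by
  have hα0 : (0:ℝ) < α := by linarith
  have h1 : (1:ℝ) - 1 / α = (α - 1) / α := by field_simp
  have h2 : (0:ℝ) < (α - 1) / α := by rw [← h1]; rw [sub_pos, div_lt_one hα0]; linarith
  rw [h1, Real.rpow_def_of_pos h2, Real.rpow_def_of_pos (by norm_num : (0:ℝ) < 2),
    ← Real.exp_add, Real.log_div (by linarith) (by linarith)]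
  simp only [G15]
  ring_nf

theorem stmt_15 :
    ∃ a : ℝ, 1 < a ∧
      (1 - 1 / a) ^ a * 2 ^ a = 1 / Real.exp 1 ∧
      (∀ b : ℝ, 1 < b → (1 - 1 / b) ^ b * 2 ^ b = 1 / Real.exp 1 → b = a) ∧
      (∀ α : ℝ, 1 < α →
        (1 - 1 / a) ^ (a - 1) * 2 ^ a ≤ (1 - 1 / α) ^ (α - 1) * 2 ^ α) ∧
      (1 - 1 / a) ^ (a - 1) * 2 ^ a * Real.exp 1 = a / (a - 1) ∧
      1.302017 < a ∧ a < 1.302018 ∧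
      (1 - 1 / a) ^ (a - 1) * 2 ^ a * Real.exp 1 < 4.312 := by
  set x1 : ℝ := 1.302017
  set x2 : ℝ := 1.302018
  have hx1 : (1:ℝ) < x1 := by norm_num [x1]
  have hx2 : (1:ℝ) < x2 := by norm_num [x2]
  have hx12 : x1 < x2 := by norm_num [x1, x2]
  -- F x1 < -1
  have hF1 : F15 x1 < -1 := by
    apply F15_lt hx1
    have : (1:ℝ) / x1 = 1000000 / 1302017 := by norm_num [x1]
    rw [this]
    have : x1 / (2 * (x1 - 1)) = 1302017 / 604034 := by norm_num [x1]
    rw [this]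
    exact num1
  have hF2 : -1 < F15 x2 := by
    apply F15_gt hx2
    have : (1:ℝ) / x2 = 1000000 / 1302018 := by norm_num [x2]
    rw [this]
    have : x2 / (2 * (x2 - 1)) = 1302018 / 604036 := by norm_num [x2]
    rw [this]
    exact num2
  -- IVT
  have hcont : ContinuousOn F15 (Icc x1 x2) := fun x hx =>
    (F15_hasDerivAt (lt_of_lt_of_le hx1 hx.1)).continuousAt.continuousWithinAt
  have hmem : (-1 : ℝ) ∈ Ioo (F15 x1) (F15 x2) := ⟨hF1, hF2⟩
  obtain ⟨a, haIoo, haF⟩ := intermediate_value_Ioo (le_of_lt hx12) hcont hmem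
  have ha1 : 1 < a := lt_trans hx1 haIoo.1
  have ha0 : (0:ℝ) < a := by linarith
  have ha1' : (0:ℝ) < a - 1 := by linarith
  have hval : (1 - 1 / a) ^ (a - 1) * (2:ℝ) ^ a * Real.exp 1 = a / (a - 1) := by
    rw [hEq ha1, ← Real.exp_add]
    have hG : G15 a + 1 = Real.log a - Real.log (a - 1) := by
      have hF : F15 a = -1 := haF
      simp only [F15, G15] at hF ⊢
      linear_combination hF
    rw [hG, Real.exp_sub, Real.exp_log ha0, Real.exp_log ha1']
  refine ⟨a, ha1, ?_, ?_, ?_, hval, haIoo.1, haIoo.2, ?_⟩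
  · rw [gEq ha1, haF, Real.exp_neg]
    norm_num
  · intro b hb hbeq
    rw [gEq hb] at hbeq
    have : Real.exp (F15 b) = Real.exp (-1) := by
      rw [hbeq, Real.exp_neg]; norm_num
    have hFb : F15 b = -1 := Real.exp_injective this
    exact F15_strictMono.injOn (mem_Ioi.2 hb) (mem_Ioi.2 ha1) (by rw [hFb, haF])
  · intro α hα
    rw [hEq ha1, hEq hα, Real.exp_le_exp]
    rcases lt_trichotomy α a with hlt | heq | hgt
    · -- G antitone on [α, a]
      have hmono : StrictAntiOn G15 (Icc α a) := by
        apply strictAntiOn_of_deriv_neg (convex_Icc α a)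
        · exact fun y hy => (G15_hasDerivAt (lt_of_lt_of_le hα hy.1)).continuousAt.continuousWithinAt
        · intro y hy
          rw [interior_Icc] at hy
          have hy1 : 1 < y := lt_trans hα hy.1
          rw [(G15_hasDerivAt hy1).deriv]
          have : F15 y < F15 a := F15_strictMono (mem_Ioi.2 hy1) (mem_Ioi.2 ha1) hy.2
          rw [haF] at this
          apply div_neg_of_neg_of_pos (by linarith) (by linarith)
      exact le_of_lt (hmono ⟨le_refl α, le_of_lt hlt⟩ ⟨le_of_lt hlt, le_refl a⟩ hlt)
    · rw [heq]
    · have hmono : StrictMonoOn G15 (Icc a α) := by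
        apply strictMonoOn_of_deriv_pos (convex_Icc a α)
        · exact fun y hy => (G15_hasDerivAt (lt_of_lt_of_le ha1 hy.1)).continuousAt.continuousWithinAt
        · intro y hy
          rw [interior_Icc] at hy
          have hy1 : 1 < y := lt_trans ha1 hy.1
          rw [(G15_hasDerivAt hy1).deriv]
          have : F15 a < F15 y := F15_strictMono (mem_Ioi.2 ha1) (mem_Ioi.2 hy1) hy.1
          rw [haF] at this
          apply div_pos (by linarith) (by linarith)
      exact le_of_lt (hmono ⟨le_refl a, le_of_lt hgt⟩ ⟨le_of_lt hgt, le_refl α⟩ hgt)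
  · rw [hval]
    have h1 : 1.302017 < a := haIoo.1
    rw [div_lt_iff₀ ha1']
    nlinarith
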